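/- Let (x*, λ*) be an eigenpair of a symmetric tensor T. If all eigenvalues of the projected Hessian H_p(x*) have absolute value at least γ > 0 and λ* ≠ 0, then the matrix A(x*) = H(x*) − m λ* x*(x*)^T is invertible and its smallest singular value satisfies σ_min(A(x*)) ≥ min{γ, 2|λ*|}. -/

import Mathlib

open scoped RealInnerProductSpace
open Finset Matrix

noncomputable section

/-- Euclidean space `ℝ^n`. -/
abbrev Evec (n : ℕ) := EuclideanSpace ℝ (Fin n)

/-- Interpret a plain function as a vector in `ℝ^n` (with the Euclidean norm). -/
def toE {n : ℕ} (v : Fin n → ℝ) : Evec n := (WithLp.equiv 2 (Fin n → ℝ)).symm v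

/-- An order-`m` tensor on `ℝ^n`, viewed as an `m`-multilinear form. -/
abbrev SymTensor (n m : ℕ) := MultilinearMap ℝ (fun _ : Fin m => Evec n) ℝ

/-- The tensor is symmetric: invariant under permutations of its `m` slots. -/
def IsSymT {n m : ℕ} (T : SymTensor n m) : Prop :=
  ∀ (σ : Equiv.Perm (Fin m)) (v : Fin m → Evec n), (T fun i => v (σ i)) = T v

/-- `μ(x) = T(x,…,x)`. -/
def tmu {n m : ℕ} (T : SymTensor n m) (x : Evec n) : ℝ := T fun _ => x

/-- `T(I,x,…,x)`: the vector whose `i`-th entry is `T(eᵢ,x,…,x)`. -/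
def tvec {n m : ℕ} (T : SymTensor n m) (x : Evec n) : Evec n :=
  toE fun i => T fun k => if (k : ℕ) = 0 then EuclideanSpace.single i 1 else x

/-- `T(I,I,x,…,x)`: the matrix whose `(i,j)` entry is `T(eᵢ,eⱼ,x,…,x)`. -/
def tmat {n m : ℕ} (T : SymTensor n m) (x : Evec n) : Matrix (Fin n) (Fin n) ℝ :=
  Matrix.of fun i j => T fun k =>
    if (k : ℕ) = 0 then EuclideanSpace.single i 1
    else if (k : ℕ) = 1 then EuclideanSpace.single j 1 else x

/-- The gradient `g(x) = T(I,x,…,x) − μ(x) x`. -/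
def gvec {n m : ℕ} (T : SymTensor n m) (x : Evec n) : Evec n := tvec T x - tmu T x • x

/-- The Hessian `H = (m−1) T(I,I,x,…,x) − λ I` (with the eigenvalue `λ` given). -/
def HmatL {n m : ℕ} (T : SymTensor n m) (x : Evec n) (lam : ℝ) :
    Matrix (Fin n) (Fin n) ℝ :=
  ((m : ℝ) - 1) • tmat T x - lam • (1 : Matrix (Fin n) (Fin n) ℝ)

/-- `(x,λ)` is a (real, unit-norm) eigenpair of `T`: `T(I,x,…,x) = λ x`, `‖x‖ = 1`. -/
def IsEigenpair {n m : ℕ} (T : SymTensor n m) (x : Evec n) (lam : ℝ) : Prop :=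
  tvec T x = lam • x ∧ ‖x‖ = 1

/-! ### Auxiliary lemmas -/

lemma inner_eq_dot {n : ℕ} (a b : Evec n) :
    ⟪a, b⟫ = (fun i => a i) ⬝ᵥ (fun i => b i) := by
  simp [PiLp.inner_apply, dotProduct, RCLike.inner_apply, conj_trivial]
  exact Finset.sum_congr rfl fun i _ => mul_comm _ _

lemma norm_toE_sq {n : ℕ} (a : Fin n → ℝ) : ‖toE a‖ ^ 2 = a ⬝ᵥ a := by
  rw [← real_inner_self_eq_norm_sq]; exact inner_eq_dot (toE a) (toE a)

lemma evec_sum_apply {n : ℕ} {ι : Type*} (s : Finset ι) (f : ι → Evec n) (i : Fin n) :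
    (∑ j ∈ s, f j) i = ∑ j ∈ s, f j i := by
  induction s using Finset.cons_induction with
  | empty => rfl
  | cons a s ha ih => rw [Finset.sum_cons, Finset.sum_cons, ← ih]; rfl

lemma sum_smul_single {n : ℕ} (y : Evec n) :
    ∑ j, y j • EuclideanSpace.single j (1:ℝ) = y := by
  ext i; rw [evec_sum_apply]; simp [EuclideanSpace.single_apply]

lemma dot_transpose_mulVec {N M : ℕ} (B : Matrix (Fin N) (Fin M) ℝ) (a : Fin N → ℝ)
    (c : Fin M → ℝ) : (Bᵀ *ᵥ a) ⬝ᵥ c = a ⬝ᵥ (B *ᵥ c) := by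
  rw [Matrix.mulVec_transpose, ← Matrix.dotProduct_mulVec]

lemma vecMulVec_mulVec' {N : ℕ} (a b c : Fin N → ℝ) :
    Matrix.vecMulVec a b *ᵥ c = (b ⬝ᵥ c) • a := by
  funext i
  simp only [Matrix.mulVec, Matrix.vecMulVec_apply, dotProduct, Pi.smul_apply, smul_eq_mul,
    Finset.sum_mul]
  exact Finset.sum_congr rfl fun j _ => by ring

lemma tmat_symm {n m : ℕ} (hm : 2 ≤ m) (T : SymTensor n m) (hT : IsSymT T)
    (x : Evec n) : (tmat T x)ᵀ = tmat T x := by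
  ext i j
  simp only [transpose_apply, tmat, Matrix.of_apply]
  have := hT (Equiv.swap (⟨0, by omega⟩ : Fin m) ⟨1, by omega⟩)
    (fun k => if (k : ℕ) = 0 then EuclideanSpace.single j 1
      else if (k : ℕ) = 1 then EuclideanSpace.single i 1 else x)
  rw [← this]
  congr 1
  funext k
  rcases eq_or_ne k ⟨0, by omega⟩ with rfl | hk0
  · simp [Equiv.swap_apply_left]
  rcases eq_or_ne k ⟨1, by omega⟩ with rfl | hk1
  · simp [Equiv.swap_apply_right]
  · rw [Equiv.swap_apply_of_ne_of_ne hk0 hk1]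
    have hv0 : (k : ℕ) ≠ 0 := fun hh => hk0 (Fin.ext (by simpa using hh))
    have hv1 : (k : ℕ) ≠ 1 := fun hh => hk1 (Fin.ext (by simpa using hh))
    simp [hv0, hv1]

lemma tmat_mulVec {n m : ℕ} (hm : 2 ≤ m) (T : SymTensor n m) (x : Evec n) :
    tmat T x *ᵥ (fun i => x i) = fun i => tvec T x i := by
  funext i
  set i1 : Fin m := ⟨1, by omega⟩ with hi1
  set base : Fin m → Evec n := fun k => if (k : ℕ) = 0 then EuclideanSpace.single i 1 else x
    with hbase
  have hfam : ∀ j : Fin n, (fun k : Fin m => if (k : ℕ) = 0 then EuclideanSpace.single i 1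
      else if (k : ℕ) = 1 then EuclideanSpace.single j 1 else x)
      = Function.update base i1 (EuclideanSpace.single j 1) := by
    intro j
    funext k
    rcases eq_or_ne k i1 with rfl | hk1
    · simp [Function.update_self, hi1]
    · have hv1 : (k : ℕ) ≠ 1 := fun hh => hk1 (Fin.ext (by simpa using hh))
      rw [Function.update_of_ne hk1]
      simp [hbase, hv1]
  have hsum : (∑ j, (x j) • EuclideanSpace.single j (1:ℝ)) = x := sum_smul_single x
  calc (tmat T x *ᵥ fun i => x i) i
      = ∑ j, x j * T (Function.update base i1 (EuclideanSpace.single j 1)) := by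
        simp only [mulVec, dotProduct, tmat, Matrix.of_apply, hfam, mul_comm]
    _ = ∑ j, T (Function.update base i1 ((x j) • EuclideanSpace.single j 1)) := by
        simp [MultilinearMap.map_update_smul]
    _ = T (Function.update base i1 (∑ j, (x j) • EuclideanSpace.single j (1:ℝ))) := by
        have hlin : ∀ y : Evec n, T (Function.update base i1 y) = T.toLinearMap base i1 y :=
          fun y => rfl
        simp only [hlin]
        rw [map_sum (T.toLinearMap base i1) (fun j => (x j) • EuclideanSpace.single j (1:ℝ)) univ]
    _ = T base := by rw [hsum]; have : base i1 = x := by simp [hbase, hi1]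
                     conv_rhs => rw [← Function.update_eq_self i1 base]
                     rw [this]
    _ = tvec T x i := rfl

lemma sym_mulVec_lower {N : ℕ} (M : Matrix (Fin N) (Fin N) ℝ) (hsym : Mᵀ = M) {γ : ℝ}
    (hγ : 0 ≤ γ)
    (hev : ∀ (μ : ℝ) (v : Fin N → ℝ), v ≠ 0 → M *ᵥ v = μ • v → γ ≤ |μ|)
    (u : Fin N → ℝ) : γ ^ 2 * (u ⬝ᵥ u) ≤ (M *ᵥ u) ⬝ᵥ (M *ᵥ u) := by
  have hherm : M.IsHermitian := by
    rwa [Matrix.IsHermitian, Matrix.conjTranspose_eq_transpose_of_trivial]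
  set b := hherm.eigenvectorBasis with hb
  set μ := hherm.eigenvalues with hμ
  have hmu : ∀ i, γ ≤ |μ i| := by
    intro i
    refine hev (μ i) (b i) ?_ (hherm.mulVec_eigenvectorBasis i)
    intro hc
    exact hherm.eigenvectorBasis.orthonormal.ne_zero i (by ext k; exact congrFun hc k)
  have hpar : ∀ z : Evec N, ‖z‖ ^ 2 = ∑ i, ⟪b i, z⟫ ^ 2 := by
    intro z
    rw [← b.repr.norm_map z, EuclideanSpace.norm_eq, Real.sq_sqrt (by positivity)]
    exact Finset.sum_congr rfl fun i _ => by
      rw [Real.norm_eq_abs, sq_abs, OrthonormalBasis.repr_apply_apply]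
  have hcoef : ∀ i, ⟪b i, toE (M *ᵥ u)⟫ = μ i * ⟪b i, toE u⟫ := by
    intro i
    rw [inner_eq_dot, inner_eq_dot]
    show (fun k => b i k) ⬝ᵥ (M *ᵥ u) = μ i * ((fun k => b i k) ⬝ᵥ u)
    have hev1 : M *ᵥ (fun k => b i k) = fun k => μ i * b i k := by
      calc M *ᵥ (fun k => b i k) = M *ᵥ (WithLp.equiv 2 (Fin N → ℝ)) (b i) := rfl
        _ = μ i • (WithLp.equiv 2 (Fin N → ℝ)) (b i) := hherm.mulVec_eigenvectorBasis i
        _ = fun k => μ i * b i k := rfl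
    rw [Matrix.dotProduct_mulVec, ← Matrix.mulVec_transpose, hsym, hev1]
    simp [dotProduct, Finset.mul_sum, mul_assoc]
  have h1 : (M *ᵥ u) ⬝ᵥ (M *ᵥ u) = ∑ i, (μ i * ⟪b i, toE u⟫) ^ 2 := by
    rw [← norm_toE_sq, hpar]
    exact Finset.sum_congr rfl fun i _ => by rw [hcoef]
  have h2 : u ⬝ᵥ u = ∑ i, ⟪b i, toE u⟫ ^ 2 := by rw [← norm_toE_sq, hpar]
  rw [h1, h2, Finset.mul_sum]
  refine Finset.sum_le_sum fun i _ => ?_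
  rw [mul_pow]
  have : γ ^ 2 ≤ μ i ^ 2 := by
    rw [← sq_abs (μ i)]
    exact pow_le_pow_left₀ hγ (hmu i) 2
  nlinarith [sq_nonneg (⟪b i, toE u⟫ : ℝ)]

theorem stmt_6 {n m : ℕ} (hm : 2 ≤ m) (T : SymTensor n m) (hT : IsSymT T)
    (x : Evec n) (lam : ℝ) (h : IsEigenpair T x lam) (hlam : lam ≠ 0)
    (U : Matrix (Fin n) (Fin (n - 1)) ℝ) (hU : Uᵀ * U = 1)
    (hUx : U * Uᵀ = 1 - Matrix.vecMulVec (fun i => x i) (fun i => x i))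
    (γ : ℝ) (hγ : 0 < γ)
    (hstable : ∀ (μ : ℝ) (v : Fin (n - 1) → ℝ), v ≠ 0 →
      (Uᵀ * HmatL T x lam * U).mulVec v = μ • v → γ ≤ |μ|) :
    IsUnit (HmatL T x lam
        - ((m : ℝ) * lam) • Matrix.vecMulVec (fun i => x i) (fun i => x i)) ∧
    ∀ v : Evec n,
      min γ (2 * |lam|) * ‖v‖ ≤
        ‖toE ((HmatL T x lam
            - ((m : ℝ) * lam) • Matrix.vecMulVec (fun i => x i)
                (fun i => x i)).mulVec (fun i => v i))‖ := by
  set x' : Fin n → ℝ := fun i => x i with hx'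
  set H : Matrix (Fin n) (Fin n) ℝ := HmatL T x lam with hH
  set A : Matrix (Fin n) (Fin n) ℝ := H - ((m : ℝ) * lam) • Matrix.vecMulVec x' x' with hA
  set K : ℝ := min γ (2 * |lam|) with hKdef
  have hK0 : 0 < K := lt_min hγ (by positivity)
  have hxx : x' ⬝ᵥ x' = 1 := by
    have h1 : ⟪x, x⟫ = ‖x‖ ^ 2 := real_inner_self_eq_norm_sq x
    rw [inner_eq_dot] at h1
    rw [h1, h.2]; norm_num
  have htv : (fun i => tvec T x i) = lam • x' := by
    funext i
    have := congrFun (congrArg (fun (y : Evec n) => (fun i => y i)) h.1) i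
    simpa using this
  have hHx : H *ᵥ x' = (((m : ℝ) - 2) * lam) • x' := by
    rw [hH, HmatL, Matrix.sub_mulVec, Matrix.smul_mulVec, Matrix.smul_mulVec,
      Matrix.one_mulVec, tmat_mulVec hm T x, htv]
    funext i
    simp only [Pi.sub_apply, Pi.smul_apply, smul_eq_mul]
    ring
  have hHsym : Hᵀ = H := by
    rw [hH, HmatL, Matrix.transpose_sub, Matrix.transpose_smul, Matrix.transpose_smul,
      Matrix.transpose_one, tmat_symm hm T hT x]
  -- key: A applied to vectors
  have hAw : ∀ w : Fin n → ℝ, A *ᵥ w = H *ᵥ w - (((m : ℝ) * lam) * (x' ⬝ᵥ w)) • x' := by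
    intro w
    rw [hA, Matrix.sub_mulVec, Matrix.smul_mulVec, vecMulVec_mulVec']
    rw [smul_smul]
  have key : ∀ v : Evec n, K * ‖v‖ ≤ ‖toE (A *ᵥ (fun i => v i))‖ := by
    intro v
    set v' : Fin n → ℝ := fun i => v i with hv'
    set c : ℝ := x' ⬝ᵥ v' with hc
    set w : Fin n → ℝ := v' - c • x' with hw
    have hwo : x' ⬝ᵥ w = 0 := by
      rw [hw, dotProduct_sub, dotProduct_smul, ← hc, hxx]
      simp
    have hxz : x' ⬝ᵥ (H *ᵥ w) = 0 := by
      rw [← dot_transpose_mulVec H x' w, hHsym, hHx, smul_dotProduct, hwo, smul_eq_mul, mul_zero]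
    -- lower bound on ‖H w‖² via the projected Hessian
    have hz_lower : γ ^ 2 * (w ⬝ᵥ w) ≤ (H *ᵥ w) ⬝ᵥ (H *ᵥ w) := by
      set u : Fin (n-1) → ℝ := Uᵀ *ᵥ w with hu
      have hUu : U *ᵥ u = w := by
        rw [hu, Matrix.mulVec_mulVec, hUx, Matrix.sub_mulVec, Matrix.one_mulVec,
          vecMulVec_mulVec', hwo]
        simp
      have huu : u ⬝ᵥ u = w ⬝ᵥ w := by
        conv_lhs => rw [hu, dot_transpose_mulVec U w u, hUu]
      have hHp_sym : (Uᵀ * H * U)ᵀ = Uᵀ * H * U := by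
        rw [Matrix.transpose_mul, Matrix.transpose_mul, Matrix.transpose_transpose, hHsym,
          Matrix.mul_assoc]
      have hHpu : (Uᵀ * H * U) *ᵥ u = Uᵀ *ᵥ (H *ᵥ w) := by
        rw [← Matrix.mulVec_mulVec, ← Matrix.mulVec_mulVec, hUu]
      have hUz : (Uᵀ *ᵥ (H *ᵥ w)) ⬝ᵥ (Uᵀ *ᵥ (H *ᵥ w)) = (H *ᵥ w) ⬝ᵥ (H *ᵥ w) := by
        rw [dot_transpose_mulVec U (H *ᵥ w) (Uᵀ *ᵥ (H *ᵥ w)), Matrix.mulVec_mulVec, hUx,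
          Matrix.sub_mulVec, Matrix.one_mulVec, vecMulVec_mulVec', hxz]
        simp
      have := sym_mulVec_lower (Uᵀ * H * U) hHp_sym hγ.le hstable u
      rw [hHpu, hUz, huu] at this
      exact this
    -- expand the squared norms
    have hvdecomp : v' = c • x' + w := by rw [hw]; ring_nf
    have hAv : A *ᵥ v' = ((-(2 * lam)) * c) • x' + H *ᵥ w := by
      rw [hAw v', hvdecomp, Matrix.mulVec_add, Matrix.mulVec_smul, hHx, dotProduct_add,
        dotProduct_smul, hxx, hwo]
      funext i
      simp only [Pi.add_apply, Pi.sub_apply, Pi.smul_apply, smul_eq_mul]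
      ring
    have hAvsq : (A *ᵥ v') ⬝ᵥ (A *ᵥ v')
        = (2 * lam * c) ^ 2 + (H *ᵥ w) ⬝ᵥ (H *ᵥ w) := by
      rw [hAv]
      simp only [add_dotProduct, dotProduct_add, smul_dotProduct, dotProduct_smul,
        smul_eq_mul, hxx, hxz, dotProduct_comm (H *ᵥ w) x']
      ring
    have hvsq : v' ⬝ᵥ v' = c ^ 2 + w ⬝ᵥ w := by
      conv_lhs => rw [hvdecomp]
      simp only [add_dotProduct, dotProduct_add, smul_dotProduct, dotProduct_smul,
        smul_eq_mul, hxx, hwo, dotProduct_comm w x']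
      ring
    have hwnn : 0 ≤ w ⬝ᵥ w := by rw [← norm_toE_sq]; positivity
    have hKγ : K ^ 2 ≤ γ ^ 2 := pow_le_pow_left₀ hK0.le (min_le_left _ _) 2
    have hKlam : K ^ 2 ≤ (2 * lam) ^ 2 := by
      have h1 : K ≤ 2 * |lam| := min_le_right _ _
      have := pow_le_pow_left₀ hK0.le h1 2
      calc K ^ 2 ≤ (2 * |lam|) ^ 2 := this
        _ = (2 * lam) ^ 2 := by rw [mul_pow, mul_pow, sq_abs]
    have hsq : (K * ‖v‖) ^ 2 ≤ ‖toE (A *ᵥ v')‖ ^ 2 := by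
      rw [norm_toE_sq, hAvsq, mul_pow]
      have hnv : ‖v‖ ^ 2 = c ^ 2 + w ⬝ᵥ w := by
        have : ‖toE v'‖ ^ 2 = v' ⬝ᵥ v' := norm_toE_sq v'
        rw [hvsq] at this
        exact this
      rw [hnv]
      have h2 : K ^ 2 * c ^ 2 ≤ (2 * lam * c) ^ 2 :=
        calc K ^ 2 * c ^ 2 ≤ (2 * lam) ^ 2 * c ^ 2 :=
              mul_le_mul_of_nonneg_right hKlam (sq_nonneg c)
          _ = (2 * lam * c) ^ 2 := by ring
      have h3 : K ^ 2 * (w ⬝ᵥ w) ≤ (H *ᵥ w) ⬝ᵥ (H *ᵥ w) :=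
        le_trans (mul_le_mul_of_nonneg_right hKγ hwnn) hz_lower
      nlinarith
    have hn1 : 0 ≤ K * ‖v‖ := by positivity
    nlinarith [norm_nonneg (toE (A *ᵥ v'))]
  constructor
  · rw [Matrix.isUnit_iff_isUnit_det, isUnit_iff_ne_zero]
    intro hdet
    obtain ⟨v, hv0, hAv⟩ := (Matrix.exists_mulVec_eq_zero_iff).2 hdet
    have h1 := key (toE v)
    have h2 : (fun i => toE v i) = v := rfl
    rw [h2, hAv] at h1
    have h3 : ‖toE (0 : Fin n → ℝ)‖ = 0 := by
      have : toE (0 : Fin n → ℝ) = 0 := rfl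
      rw [this, norm_zero]
    rw [h3] at h1
    have h4 : toE v ≠ 0 := by
      intro hc
      apply hv0
      funext i
      exact congrArg (fun y : Evec n => y i) hc
    have h5 : 0 < ‖toE v‖ := norm_pos_iff.2 h4
    nlinarith
  · exact key
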